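/- Define G³ = sup_{f : 𝒳 → [-1,1]} |E[f(X) f̂(Y)] - E[f(X)] E[f̂(Y)]| where f̂(y) = E[f(X) | Y = y], and G² = ∑_{x,y} |μ(x,y) - μ(x)μ(y)|. Then (G²/|𝒳|)² ≤ G³. -/
import Mathlib

theorem stmt_6 {X Y : Type*} [Fintype X] [Fintype Y] (μ : X × Y → ℝ)
    (hμ : ∀ z, 0 ≤ μ z) (hμs : ∑ z, μ z = 1)
    (hposY : ∀ y, 0 < ∑ x, μ (x, y)) :
    let μX : X → ℝ := fun x => ∑ y, μ (x, y)
    let μY : Y → ℝ := fun y => ∑ x, μ (x, y)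
    let fhat : (X → ℝ) → Y → ℝ := fun f y => ∑ x, f x * (μ (x, y) / μY y)
    let G3 : ℝ := sSup {v : ℝ | ∃ f : X → ℝ, (∀ x, |f x| ≤ 1) ∧
      v = |(∑ x, ∑ y, μ (x, y) * f x * fhat f y) -
            (∑ x, μX x * f x) * (∑ y, μY y * fhat f y)|}
    let G2 : ℝ := ∑ x, ∑ y, |μ (x, y) - μX x * μY y|
    (G2 / (Fintype.card X))^2 ≤ G3 := by
  intro μX μY fhat G3 G2
  classical
  have hY : ∀ y, 0 < μY y := hposY
  have hYne : ∀ y, μY y ≠ 0 := fun y => (hY y).ne'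
  have hμYsum : ∑ y, μY y = 1 := by
    rw [← hμs, Fintype.sum_prod_type]
    exact Finset.sum_comm.symm
  have hμXsum : ∑ x, μX x = 1 := by
    rw [← hμs, Fintype.sum_prod_type]
  -- the set is nonempty and bounded above
  set S : Set ℝ := {v : ℝ | ∃ f : X → ℝ, (∀ x, |f x| ≤ 1) ∧
      v = |(∑ x, ∑ y, μ (x, y) * f x * fhat f y) -
            (∑ x, μX x * f x) * (∑ y, μY y * fhat f y)|} with hS
  have hbdd : BddAbove S := by
    refine ⟨2, fun v hv => ?_⟩
    obtain ⟨f, hf, rfl⟩ := hv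
    have hfhat : ∀ y, |fhat f y| ≤ 1 := by
      intro y
      calc |fhat f y| ≤ ∑ x, |f x * (μ (x, y) / μY y)| := Finset.abs_sum_le_sum_abs _ _
        _ ≤ ∑ x, μ (x, y) / μY y := by
            refine Finset.sum_le_sum fun x _ => ?_
            rw [abs_mul, abs_of_nonneg (div_nonneg (hμ _) (hY y).le)]
            exact mul_le_of_le_one_left (div_nonneg (hμ _) (hY y).le) (hf x)
        _ = 1 := by rw [← Finset.sum_div, div_eq_one_iff_eq (hYne y)]
    have h1 : |∑ x, ∑ y, μ (x, y) * f x * fhat f y| ≤ 1 := by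
      calc |∑ x, ∑ y, μ (x, y) * f x * fhat f y|
          ≤ ∑ x, |∑ y, μ (x, y) * f x * fhat f y| := Finset.abs_sum_le_sum_abs _ _
        _ ≤ ∑ x, ∑ y, |μ (x, y) * f x * fhat f y| :=
            Finset.sum_le_sum fun x _ => Finset.abs_sum_le_sum_abs _ _
        _ ≤ ∑ x, ∑ y, μ (x, y) := by
            refine Finset.sum_le_sum fun x _ => Finset.sum_le_sum fun y _ => ?_
            rw [abs_mul, abs_mul, abs_of_nonneg (hμ _)]
            calc μ (x, y) * |f x| * |fhat f y| ≤ μ (x, y) * 1 * 1 := by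
                  refine mul_le_mul (mul_le_mul le_rfl (hf x) (abs_nonneg _) (hμ _))
                    (hfhat y) (abs_nonneg _) (mul_nonneg (hμ _) zero_le_one)
              _ = μ (x, y) := by ring
        _ = 1 := hμXsum
    have h2 : |∑ x, μX x * f x| ≤ 1 := by
      calc |∑ x, μX x * f x| ≤ ∑ x, |μX x * f x| := Finset.abs_sum_le_sum_abs _ _
        _ ≤ ∑ x, μX x := by
            refine Finset.sum_le_sum fun x _ => ?_
            rw [abs_mul, abs_of_nonneg (Finset.sum_nonneg fun y _ => hμ _)]
            exact mul_le_of_le_one_right (Finset.sum_nonneg fun y _ => hμ _) (hf x)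
        _ = 1 := hμXsum
    have h3 : |∑ y, μY y * fhat f y| ≤ 1 := by
      calc |∑ y, μY y * fhat f y| ≤ ∑ y, |μY y * fhat f y| := Finset.abs_sum_le_sum_abs _ _
        _ ≤ ∑ y, μY y := by
            refine Finset.sum_le_sum fun y _ => ?_
            rw [abs_mul, abs_of_nonneg (hY y).le]
            exact mul_le_of_le_one_right (hY y).le (hfhat y)
        _ = 1 := hμYsum
    calc |(∑ x, ∑ y, μ (x, y) * f x * fhat f y) -
            (∑ x, μX x * f x) * (∑ y, μY y * fhat f y)|
        ≤ |∑ x, ∑ y, μ (x, y) * f x * fhat f y| +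
            |(∑ x, μX x * f x) * (∑ y, μY y * fhat f y)| := abs_sub _ _
      _ ≤ 1 + 1 := by
          refine add_le_add h1 ?_
          rw [abs_mul]
          exact mul_le_one₀ h2 (abs_nonneg _) h3
      _ = 2 := by norm_num
  -- key pointwise bound : for each x0, (∑ y, |a x0 y|)^2 ≤ G3
  have key : ∀ x0 : X, (∑ y, |μ (x0, y) - μX x0 * μY y|)^2 ≤ G3 := by
    intro x0
    set f : X → ℝ := fun x => if x = x0 then (1:ℝ) else 0 with hfdef
    have hfx0 : f x0 = 1 := by rw [hfdef]; simp
    have hfne : ∀ b, b ≠ x0 → f b = 0 := by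
      intro b hb; rw [hfdef]; simp [hb]
    have hf1 : ∀ x, |f x| ≤ 1 := by
      intro x
      by_cases hx : x = x0
      · subst hx; rw [hfx0]; simp
      · rw [hfne x hx]; simp
    have hfhat : ∀ y, fhat f y = μ (x0, y) / μY y := by
      intro y
      show ∑ x, f x * (μ (x, y) / μY y) = μ (x0, y) / μY y
      rw [Finset.sum_eq_single x0]
      · rw [hfx0, one_mul]
      · intro b _ hb; rw [hfne b hb, zero_mul]
      · intro h; exact absurd (Finset.mem_univ x0) h
    have hmem : |(∑ x, ∑ y, μ (x, y) * f x * fhat f y) -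
            (∑ x, μX x * f x) * (∑ y, μY y * fhat f y)| ∈ S :=
      ⟨f, hf1, rfl⟩
    have hB1 : ∑ x, ∑ y, μ (x, y) * f x * fhat f y
        = ∑ y, μ (x0, y) ^ 2 / μY y := by
      rw [Finset.sum_comm]
      refine Finset.sum_congr rfl fun y _ => ?_
      have h1 : ∀ x, μ (x, y) * f x * fhat f y
          = if x = x0 then μ (x0, y) ^ 2 / μY y else 0 := by
        intro x
        by_cases hx : x = x0
        · subst hx
          rw [hfhat y, hfx0, mul_one, if_pos rfl, sq]
          ring
        · rw [hfne x hx, if_neg hx, mul_zero, zero_mul]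
      rw [Finset.sum_congr rfl fun x _ => h1 x,
        Finset.sum_ite_eq' Finset.univ x0 (fun _ => μ (x0, y) ^ 2 / μY y),
        if_pos (Finset.mem_univ x0)]
    have hB2 : ∑ x, μX x * f x = μX x0 := by
      have h1 : ∀ x, μX x * f x = if x = x0 then μX x0 else 0 := by
        intro x
        by_cases hx : x = x0
        · subst hx; rw [hfx0, mul_one, if_pos rfl]
        · rw [hfne x hx, if_neg hx, mul_zero]
      rw [Finset.sum_congr rfl fun x _ => h1 x,
        Finset.sum_ite_eq' Finset.univ x0 (fun _ => μX x0),
        if_pos (Finset.mem_univ x0)]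
    have hB3 : ∑ y, μY y * fhat f y = μX x0 := by
      have h1 : ∑ y, μY y * fhat f y = ∑ y, μ (x0, y) :=
        Finset.sum_congr rfl fun y _ => by
          rw [hfhat y, mul_div_cancel₀ _ (hYne y)]
      rw [h1]
    have hBval : (∑ x, ∑ y, μ (x, y) * f x * fhat f y) -
            (∑ x, μX x * f x) * (∑ y, μY y * fhat f y)
        = ∑ y, μY y * (μ (x0, y) / μY y - μX x0) ^ 2 := by
      rw [hB1, hB2, hB3]
      have expand : ∀ y, μY y * (μ (x0, y) / μY y - μX x0) ^ 2
          = μ (x0, y) ^ 2 / μY y - 2 * μX x0 * μ (x0, y) + μX x0 ^ 2 * μY y := by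
        intro y
        have hc : μY y ≠ 0 := hYne y
        field_simp
        ring
      rw [Finset.sum_congr rfl fun y _ => expand y]
      rw [Finset.sum_add_distrib, Finset.sum_sub_distrib, ← Finset.mul_sum, ← Finset.mul_sum,
        hμYsum]
      have : ∑ y, μ (x0, y) = μX x0 := rfl
      rw [this]
      ring
    -- Cauchy–Schwarz
    have hCS : (∑ y, |μ (x0, y) - μX x0 * μY y|)^2
        ≤ ∑ y, μY y * (μ (x0, y) / μY y - μX x0) ^ 2 := by
      have := Finset.sum_sq_le_sum_mul_sum_of_sq_eq_mul (Finset.univ : Finset Y)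
        (r := fun y => |μ (x0, y) - μX x0 * μY y|)
        (f := fun y => μY y)
        (g := fun y => μY y * (μ (x0, y) / μY y - μX x0) ^ 2)
        (fun y _ => (hY y).le)
        (fun y _ => mul_nonneg (hY y).le (sq_nonneg _))
        (fun y _ => by
          have h : μ (x0, y) - μX x0 * μY y = μY y * (μ (x0, y) / μY y - μX x0) := by
            rw [mul_sub, mul_div_cancel₀ _ (hYne y), mul_comm (μY y)]
          rw [sq_abs, h]
          ring)
      calc (∑ y, |μ (x0, y) - μX x0 * μY y|)^2
          ≤ (∑ y, μY y) * ∑ y, μY y * (μ (x0, y) / μY y - μX x0) ^ 2 := this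
        _ = ∑ y, μY y * (μ (x0, y) / μY y - μX x0) ^ 2 := by rw [hμYsum, one_mul]
    have hle : ∑ y, μY y * (μ (x0, y) / μY y - μX x0) ^ 2 ≤ G3 := by
      have hnn : 0 ≤ ∑ y, μY y * (μ (x0, y) / μY y - μX x0) ^ 2 :=
        Finset.sum_nonneg fun y _ => mul_nonneg (hY y).le (sq_nonneg _)
      have habs : |(∑ x, ∑ y, μ (x, y) * f x * fhat f y) -
            (∑ x, μX x * f x) * (∑ y, μY y * fhat f y)|
          = ∑ y, μY y * (μ (x0, y) / μY y - μX x0) ^ 2 := by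
        rw [hBval, abs_of_nonneg hnn]
      rw [← habs]
      exact le_csSup hbdd hmem
    exact hCS.trans hle
  -- average argument
  have hXne : Nonempty X := by
    by_contra h
    rw [not_nonempty_iff] at h
    have : (Finset.univ : Finset (X × Y)) = ∅ := by
      ext z; exact absurd (h.false z.1) (by simp)
    rw [this, Finset.sum_empty] at hμs
    norm_num at hμs
  have hcard : (0:ℝ) < Fintype.card X := by
    have := Fintype.card_pos_iff.mpr hXne
    exact_mod_cast this
  have hG2nn : 0 ≤ G2 := Finset.sum_nonneg fun x _ =>
    Finset.sum_nonneg fun y _ => abs_nonneg _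
  obtain ⟨x0, _, hx0⟩ : ∃ x0 ∈ Finset.univ, G2 / (Fintype.card X)
      ≤ ∑ y, |μ (x0, y) - μX x0 * μY y| := by
    apply Finset.exists_le_of_sum_le ⟨Classical.arbitrary X, Finset.mem_univ _⟩
    have : ∑ _x : X, G2 / (Fintype.card X) = G2 := by
      rw [Finset.sum_const, Finset.card_univ, nsmul_eq_mul,
        mul_div_cancel₀ _ hcard.ne']
    rw [this]
  calc (G2 / (Fintype.card X))^2 ≤ (∑ y, |μ (x0, y) - μX x0 * μY y|)^2 := by
        apply pow_le_pow_left₀ (div_nonneg hG2nn hcard.le) hx0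
    _ ≤ G3 := key x0
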